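/- Let M belong to the class LC. Then the following are equivalent: (i) there exist a ∈ ℕ_{>0} and C ≥ 1 such that ω_M(t) ≤ a·(ω_M(Ct) − ω_M(t)) + C for all t ≥ 0; (ii) ω_M satisfies (ω₆); (iii) M has moderate growth (mg). -/
import Mathlib


open Real Filter Set

noncomputable section

/-- The class `LC` of normalized log-convex sequences with `(M_p)^{1/p} → ∞`. -/
def IsLC (M : ℕ → ℝ) : Prop :=
  (∀ p, 0 < M p) ∧ M 0 = 1 ∧ 1 ≤ M 1 ∧
  (∀ p : ℕ, 1 ≤ p → (M p) ^ 2 ≤ M (p - 1) * M (p + 1)) ∧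
  Filter.Tendsto (fun p : ℕ => (M p) ^ ((p : ℝ)⁻¹)) Filter.atTop Filter.atTop

/-- The sequence of quotients `μ_0 = 1`, `μ_p = M_p / M_{p-1}`. -/
def seqQuot (M : ℕ → ℝ) (p : ℕ) : ℝ :=
  if p = 0 then 1 else M p / M (p - 1)

/-- The associated weight function `ω_M(t) = sup_p log(t^p / M_p)`. -/
def omegaM (M : ℕ → ℝ) (t : ℝ) : ℝ :=
  ⨆ p : ℕ, Real.log (t ^ p / M p)

/-- The auxiliary sequence `M̃^a_p = (M_{ap})^{1/a}`. -/
def tildeSeq (M : ℕ → ℝ) (a : ℕ) (p : ℕ) : ℝ :=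
  (M (a * p)) ^ ((a : ℝ)⁻¹)

/-- Condition (genmg) for the parameter `d`. -/
def genMG (M : ℕ → ℝ) (d : ℕ) : Prop :=
  ∃ A : ℝ, 1 ≤ A ∧ ∀ p : ℕ, 1 ≤ p →
    seqQuot M p ≤ A * (M (d * p)) ^ (((d : ℝ) * (p : ℝ))⁻¹)

/-- The moderate growth index `g(M) ∈ ℕ ∪ {+∞}`. -/
def gIndex (M : ℕ → ℝ) : ℕ∞ :=
  sInf {e : ℕ∞ | ∃ n : ℕ, 0 < n ∧ genMG M n ∧ e = (n : ℕ∞)}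

/-- The relation `M ≼ N`, i.e. `sup_{p ≥ 1} (M_p/N_p)^{1/p} < ∞`. -/
def Preceq (M N : ℕ → ℝ) : Prop :=
  ∃ C : ℝ, ∀ p : ℕ, 1 ≤ p → (M p / N p) ^ ((p : ℝ)⁻¹) ≤ C

/-- The class `W₀` of normalized weight functions. -/
def IsW0 (ω : ℝ → ℝ) : Prop :=
  ContinuousOn ω (Set.Ici 0) ∧
  MonotoneOn ω (Set.Ici 0) ∧
  (∀ t ∈ Set.Icc (0 : ℝ) 1, ω t = 0) ∧
  Filter.Tendsto ω Filter.atTop Filter.atTop ∧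
  (fun t => Real.log t) =o[Filter.atTop] ω ∧
  ConvexOn ℝ Set.univ (fun t => ω (Real.exp t))

/-- The Legendre–Fenchel–Young conjugate `φ*_ω(x) = sup{xy − ω(e^y) : y ≥ 0}`. -/
def phiStar (ω : ℝ → ℝ) (x : ℝ) : ℝ :=
  sSup {z : ℝ | ∃ y : ℝ, 0 ≤ y ∧ z = x * y - ω (Real.exp y)}

/-- The associated weight matrix `W^(ℓ)_p = exp(φ*_ω(ℓp)/ℓ)`. -/
def Wmat (ω : ℝ → ℝ) (l : ℝ) (p : ℕ) : ℝ :=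
  Real.exp (phiStar ω (l * p) / l)

/-- Condition `(ω₆)`. -/
def Omega6 (ω : ℝ → ℝ) : Prop :=
  ∃ H : ℝ, 1 ≤ H ∧ ∀ t : ℝ, 0 ≤ t → 2 * ω t ≤ ω (H * t) + H

/-- The counting function `Σ_M(t) = #{p ≥ 1 : μ_p ≤ t}`. -/
def SigmaM (M : ℕ → ℝ) (t : ℝ) : ℕ :=
  Set.ncard {p : ℕ | 1 ≤ p ∧ seqQuot M p ≤ t}

end

namespace Stmt3Aux

variable {M : ℕ → ℝ}

lemma mu_pos (hM : IsLC M) (p : ℕ) : 0 < seqQuot M p := by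
  unfold seqQuot
  split
  · norm_num
  · exact div_pos (hM.1 _) (hM.1 _)

lemma mu_mono (hM : IsLC M) : Monotone (seqQuot M) := by
  apply monotone_nat_of_le_succ
  intro p
  match p with
  | 0 =>
    simp only [seqQuot, if_pos rfl, if_neg one_ne_zero]
    simpa [hM.2.1] using hM.2.2.1
  | Nat.succ n =>
    simp only [seqQuot, if_neg (Nat.succ_ne_zero n), if_neg (Nat.succ_ne_zero (n+1)),
      Nat.succ_sub_one]
    rw [div_le_div_iff₀ (hM.1 _) (hM.1 _)]
    have h := hM.2.2.2.1 (n+1) (by omega)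
    simp only [Nat.add_sub_cancel] at h
    nlinarith [hM.1 n, hM.1 (n+1), hM.1 (n+2)]

lemma mu_ge_one (hM : IsLC M) (p : ℕ) : 1 ≤ seqQuot M p := by
  have := mu_mono hM (Nat.zero_le p)
  simpa [seqQuot] using this

lemma M_succ (hM : IsLC M) (n : ℕ) : M (n + 1) = M n * seqQuot M (n + 1) := by
  simp only [seqQuot, if_neg (Nat.succ_ne_zero n), Nat.add_sub_cancel]
  rw [mul_comm, div_mul_cancel₀ _ (hM.1 n).ne']

lemma tele_le (hM : IsLC M) (j k : ℕ) : M (j + k) ≤ M j * seqQuot M (j + k) ^ k := by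
  induction k with
  | zero => simp
  | succ k ih =>
    have hmono : seqQuot M (j + k) ≤ seqQuot M (j + k + 1) := mu_mono hM (by omega)
    have hμ : 0 < seqQuot M (j + k) := mu_pos hM _
    have hμ' : 0 < seqQuot M (j + k + 1) := mu_pos hM _
    calc M (j + (k + 1)) = M (j + k) * seqQuot M (j + k + 1) := M_succ hM (j + k)
      _ ≤ (M j * seqQuot M (j + k) ^ k) * seqQuot M (j + k + 1) :=
          mul_le_mul_of_nonneg_right ih hμ'.le
      _ ≤ (M j * seqQuot M (j + k + 1) ^ k) * seqQuot M (j + k + 1) := by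
          exact mul_le_mul_of_nonneg_right
            (mul_le_mul_of_nonneg_left (pow_le_pow_left₀ hμ.le hmono k) (hM.1 j).le) hμ'.le
      _ = M j * seqQuot M (j + (k + 1)) ^ (k + 1) := by ring_nf
  
lemma tele_ge (hM : IsLC M) (j k : ℕ) : M j * seqQuot M j ^ k ≤ M (j + k) := by
  induction k with
  | zero => simp
  | succ k ih =>
    have hmono : seqQuot M j ≤ seqQuot M (j + k + 1) := mu_mono hM (by omega)
    have hμ : 0 < seqQuot M j := mu_pos hM _
    calc M j * seqQuot M j ^ (k + 1) = (M j * seqQuot M j ^ k) * seqQuot M j := by ring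
      _ ≤ M (j + k) * seqQuot M j := mul_le_mul_of_nonneg_right ih hμ.le
      _ ≤ M (j + k) * seqQuot M (j + k + 1) := by
          exact mul_le_mul_of_nonneg_left hmono (hM.1 _).le
      _ = M (j + (k + 1)) := (M_succ hM (j + k)).symm

lemma bddA (hM : IsLC M) {t : ℝ} (ht : 0 ≤ t) :
    BddAbove (Set.range fun p : ℕ => Real.log (t ^ p / M p)) := by
  have hev : ∀ᶠ p : ℕ in atTop, Real.log (t ^ p / M p) ≤ 0 := by
    have h1 : ∀ᶠ p : ℕ in atTop, (t + 1 : ℝ) ≤ (M p) ^ ((p : ℝ)⁻¹) :=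
      hM.2.2.2.2.eventually_ge_atTop (t + 1)
    have h2 : ∀ᶠ p : ℕ in atTop, 1 ≤ p := eventually_ge_atTop 1
    filter_upwards [h1, h2] with p hp hp1
    have hpn : ((p : ℝ)) ≠ 0 := Nat.cast_ne_zero.mpr (by omega)
    have hMp : (t + 1) ^ p ≤ M p := by
      have h3 : ((t + 1 : ℝ)) ^ p ≤ ((M p) ^ ((p : ℝ)⁻¹)) ^ p :=
        pow_le_pow_left₀ (by linarith) hp p
      rwa [← Real.rpow_natCast ((M p) ^ ((p : ℝ)⁻¹)) p, ← Real.rpow_mul (hM.1 p).le,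
        inv_mul_cancel₀ hpn, Real.rpow_one] at h3
    apply Real.log_nonpos (div_nonneg (by positivity) (hM.1 p).le)
    rw [div_le_one (hM.1 p)]
    calc t ^ p ≤ (t + 1) ^ p := pow_le_pow_left₀ ht (by linarith) p
      _ ≤ M p := hMp
  exact (Filter.IsBoundedUnder.bddAbove_range ⟨0, eventually_map.mpr hev⟩)

lemma log_le_omega (hM : IsLC M) {t : ℝ} (ht : 0 ≤ t) (p : ℕ) :
    Real.log (t ^ p / M p) ≤ omegaM M t :=
  le_ciSup (bddA hM ht) p

lemma omega_nonneg (hM : IsLC M) {t : ℝ} (ht : 0 ≤ t) : 0 ≤ omegaM M t := by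
  have := log_le_omega hM ht 0
  simpa [hM.2.1] using this

lemma omega_zero (hM : IsLC M) : omegaM M 0 = 0 := by
  have h1 : omegaM M 0 ≤ 0 := by
    apply ciSup_le
    intro p
    cases p with
    | zero => simp [hM.2.1]
    | succ n => simp
  linarith [omega_nonneg hM (le_refl (0:ℝ))]

lemma omega_mono (hM : IsLC M) {s t : ℝ} (hs : 0 ≤ s) (hst : s ≤ t) :
    omegaM M s ≤ omegaM M t := by
  rcases eq_or_lt_of_le hs with h0 | h0
  · rw [← h0, omega_zero hM]
    exact omega_nonneg hM (le_trans hs hst)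
  · apply ciSup_le
    intro p
    refine le_trans ?_ (log_le_omega hM (le_trans hs hst) p)
    have hsp : (0:ℝ) < s ^ p / M p := div_pos (pow_pos h0 p) (hM.1 p)
    apply Real.log_le_log hsp
    exact (div_le_div_iff_of_pos_right (hM.1 p)).mpr (pow_le_pow_left₀ hs hst p)

lemma omega_at_mu (hM : IsLC M) (p : ℕ) :
    omegaM M (seqQuot M p) = Real.log ((seqQuot M p) ^ p / M p) := by
  have hμ : 0 < seqQuot M p := mu_pos hM p
  apply le_antisymm
  · apply ciSup_le
    intro q
    have hkey : (seqQuot M p) ^ q * M p ≤ (seqQuot M p) ^ p * M q := by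
      rcases le_total q p with h | h
      · obtain ⟨k, rfl⟩ := Nat.exists_eq_add_of_le h
        have h1 := tele_le hM q k
        calc (seqQuot M (q + k)) ^ q * M (q + k)
            ≤ (seqQuot M (q + k)) ^ q * (M q * seqQuot M (q + k) ^ k) :=
              mul_le_mul_of_nonneg_left h1 (pow_nonneg hμ.le q)
          _ = (seqQuot M (q + k)) ^ (q + k) * M q := by rw [pow_add]; ring
      · obtain ⟨k, rfl⟩ := Nat.exists_eq_add_of_le h
        have h1 := tele_ge hM p k
        calc (seqQuot M p) ^ (p + k) * M p
            = (seqQuot M p) ^ p * (M p * seqQuot M p ^ k) := by rw [pow_add]; ring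
          _ ≤ (seqQuot M p) ^ p * M (p + k) :=
              mul_le_mul_of_nonneg_left h1 (pow_nonneg hμ.le p)
    have hq : (0:ℝ) < (seqQuot M p) ^ q / M q := div_pos (pow_pos hμ q) (hM.1 q)
    apply Real.log_le_log hq
    rw [div_le_div_iff₀ (hM.1 q) (hM.1 p)]
    exact hkey
  · exact log_le_omega hM hμ.le p

lemma pow_le_omega_exp (hM : IsLC M) {t : ℝ} (ht : 0 < t) (p : ℕ) :
    t ^ p ≤ M p * Real.exp (omegaM M t) := by
  have h := Real.exp_le_exp.mpr (log_le_omega hM ht.le p)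
  rw [Real.exp_log (div_pos (pow_pos ht p) (hM.1 p))] at h
  rw [div_le_iff₀ (hM.1 p)] at h
  linarith [h]

lemma mg_of_omega6 (hM : IsLC M) (h : Omega6 (omegaM M)) :
    ∃ C : ℝ, 1 ≤ C ∧ ∀ p q : ℕ, M (p + q) ≤ C ^ (p + q + 1) * M p * M q := by
  obtain ⟨H, hH, h6⟩ := h
  have hexp : H + 1 ≤ Real.exp H := Real.add_one_le_exp H
  refine ⟨Real.exp H, by linarith, ?_⟩
  intro p q
  set n := p + q with hn
  rcases Nat.eq_zero_or_pos n with h0 | hpos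
  · have hp : p = 0 := by omega
    have hq : q = 0 := by omega
    rw [h0, hp, hq, hM.2.1, mul_one, mul_one, pow_one]
    linarith
  · set μ := seqQuot M n with hμdef
    have hμ1 : 1 ≤ μ := mu_ge_one hM n
    have hμ0 : 0 < μ := by linarith
    have hH0 : 0 < H := by linarith
    set s := μ / H with hs
    have hs0 : 0 < s := div_pos hμ0 hH0
    have hHs : H * s = μ := by rw [hs]; field_simp
    have hω : omegaM M μ = Real.log (μ ^ n / M n) := omega_at_mu hM n
    have hMn : M n * Real.exp (omegaM M μ) = μ ^ n := by
      rw [hω, Real.exp_log (div_pos (pow_pos hμ0 n) (hM.1 n)),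
        mul_div_cancel₀ _ (hM.1 n).ne']
    have h2 : 2 * omegaM M s ≤ omegaM M μ + H := by
      have := h6 s hs0.le
      rwa [hHs] at this
    have hp' : s ^ p ≤ M p * Real.exp (omegaM M s) := pow_le_omega_exp hM hs0 p
    have hq' : s ^ q ≤ M q * Real.exp (omegaM M s) := pow_le_omega_exp hM hs0 q
    have key : M n * Real.exp (2 * omegaM M s) ≤
        (Real.exp H * H ^ n * M p * M q) * Real.exp (2 * omegaM M s) := by
      calc M n * Real.exp (2 * omegaM M s)
          ≤ M n * Real.exp (omegaM M μ + H) :=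
            mul_le_mul_of_nonneg_left (Real.exp_le_exp.mpr h2) (hM.1 n).le
        _ = μ ^ n * Real.exp H := by rw [Real.exp_add, ← mul_assoc, hMn]
        _ = Real.exp H * H ^ n * (s ^ p * s ^ q) := by
            rw [← hHs, mul_pow, hn, pow_add]; ring
        _ ≤ Real.exp H * H ^ n *
            ((M p * Real.exp (omegaM M s)) * (M q * Real.exp (omegaM M s))) := by
            apply mul_le_mul_of_nonneg_left _ (by positivity)
            exact mul_le_mul hp' hq' (pow_nonneg hs0.le q)
              (mul_nonneg (hM.1 p).le (Real.exp_pos _).le)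
        _ = (Real.exp H * H ^ n * M p * M q) * Real.exp (2 * omegaM M s) := by
            rw [two_mul, Real.exp_add]; ring
    have hMn_le : M n ≤ Real.exp H * H ^ n * M p * M q :=
      le_of_mul_le_mul_right key (Real.exp_pos _)
    calc M n ≤ Real.exp H * H ^ n * M p * M q := hMn_le
      _ ≤ Real.exp H * (Real.exp H) ^ n * M p * M q := by
          apply mul_le_mul_of_nonneg_right _ (hM.1 q).le
          apply mul_le_mul_of_nonneg_right _ (hM.1 p).le
          apply mul_le_mul_of_nonneg_left _ (Real.exp_pos _).le
          exact pow_le_pow_left₀ hH0.le (by linarith) n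
      _ = (Real.exp H) ^ (n + 1) * M p * M q := by ring

lemma omega6_of_mg (hM : IsLC M)
    (h : ∃ C : ℝ, 1 ≤ C ∧ ∀ p q : ℕ, M (p + q) ≤ C ^ (p + q + 1) * M p * M q) :
    Omega6 (omegaM M) := by
  obtain ⟨C, hC, hmg⟩ := h
  refine ⟨C, hC, ?_⟩
  intro t ht
  rcases eq_or_lt_of_le ht with h0 | h0
  · rw [← h0, mul_zero, omega_zero hM]
    linarith
  · have hC0 : (0:ℝ) < C := by linarith
    have hCt : 0 ≤ C * t := by positivity
    have hB : omegaM M t ≤ (omegaM M (C * t) + C) / 2 := by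
      apply ciSup_le
      intro p
      have hmg' := hmg p p
      have hx : (0:ℝ) < t ^ p / M p := div_pos (pow_pos h0 p) (hM.1 p)
      have hlog2 : 2 * Real.log (t ^ p / M p) =
          Real.log ((t ^ p / M p) * (t ^ p / M p)) := by
        rw [Real.log_mul hx.ne' hx.ne']; ring
      have hkey : (t ^ p / M p) * (t ^ p / M p) ≤ C * ((C * t) ^ (2 * p) / M (2 * p)) := by
        rw [div_mul_div_comm, ← mul_div_assoc,
          div_le_div_iff₀ (mul_pos (hM.1 p) (hM.1 p)) (hM.1 _)]
        have he1 : t ^ p * t ^ p = t ^ (2 * p) := by rw [two_mul, pow_add]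
        have he2 : C * (C * t) ^ (2 * p) = C ^ (2 * p + 1) * t ^ (2 * p) := by
          rw [mul_pow]; ring
        have hmm : p + p = 2 * p := by ring
        rw [hmm] at hmg'
        calc t ^ p * t ^ p * M (2 * p) = t ^ (2 * p) * M (2 * p) := by rw [he1]
          _ ≤ t ^ (2 * p) * (C ^ (2 * p + 1) * M p * M p) :=
              mul_le_mul_of_nonneg_left hmg' (by positivity)
          _ = C * (C * t) ^ (2 * p) * (M p * M p) := by rw [he2]; ring
      have h1 : Real.log ((t ^ p / M p) * (t ^ p / M p)) ≤
          Real.log (C * ((C * t) ^ (2 * p) / M (2 * p))) :=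
        Real.log_le_log (by positivity) hkey
      have h2 : Real.log (C * ((C * t) ^ (2 * p) / M (2 * p))) =
          Real.log C + Real.log ((C * t) ^ (2 * p) / M (2 * p)) :=
        Real.log_mul hC0.ne' (div_pos (pow_pos (by positivity) _) (hM.1 _)).ne'
      have h3 : Real.log ((C * t) ^ (2 * p) / M (2 * p)) ≤ omegaM M (C * t) :=
        log_le_omega hM hCt (2 * p)
      have h4 : Real.log C ≤ C := by
        have := Real.log_le_sub_one_of_pos hC0
        linarith
      linarith
    linarith

lemma omega6_of_i (hM : IsLC M)
    (h : ∃ a : ℕ, 0 < a ∧ ∃ C : ℝ, 1 ≤ C ∧ ∀ t : ℝ, 0 ≤ t →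
      omegaM M t ≤ (a : ℝ) * (omegaM M (C * t) - omegaM M t) + C) :
    Omega6 (omegaM M) := by
  obtain ⟨a, ha, C, hC, hi⟩ := h
  have ha1 : (1:ℝ) ≤ (a:ℝ) := by exact_mod_cast ha
  have hA : (0:ℝ) < (a:ℝ) + 1 := by linarith
  set θ : ℝ := (a:ℝ) / ((a:ℝ) + 1) with hθdef
  have hθ0 : 0 ≤ θ := by positivity
  have hθ1 : θ < 1 := by
    rw [hθdef, div_lt_one hA]; linarith
  have hstep : ∀ t : ℝ, 0 ≤ t → omegaM M t ≤ θ * omegaM M (C * t) + C := by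
    intro t ht
    have h := hi t ht
    have hkey : ((a:ℝ) + 1) * omegaM M t ≤ (a:ℝ) * omegaM M (C * t) + ((a:ℝ) + 1) * C := by
      nlinarith
    have h2 : omegaM M t - C ≤ (a:ℝ) * omegaM M (C * t) / ((a:ℝ) + 1) := by
      rw [le_div_iff₀ hA]; nlinarith
    have h3 : θ * omegaM M (C * t) = (a:ℝ) * omegaM M (C * t) / ((a:ℝ) + 1) := by
      rw [hθdef]; ring
    linarith
  have hiter : ∀ k : ℕ, ∀ t : ℝ, 0 ≤ t →
      omegaM M t ≤ θ ^ k * omegaM M (C ^ k * t) + (k : ℝ) * C := by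
    intro k
    induction k with
    | zero => intro t ht; simp
    | succ k ih =>
      intro t ht
      have hC0 : (0:ℝ) < C := by linarith
      have h1 := ih t ht
      have h2 := hstep (C ^ k * t) (by positivity)
      have he : C * (C ^ k * t) = C ^ (k + 1) * t := by ring
      rw [he] at h2
      have h3 : θ ^ k * omegaM M (C ^ k * t) ≤
          θ ^ k * (θ * omegaM M (C ^ (k + 1) * t) + C) :=
        mul_le_mul_of_nonneg_left h2 (pow_nonneg hθ0 k)
      have he2 : θ ^ k * (θ * omegaM M (C ^ (k + 1) * t) + C) =
          θ ^ (k + 1) * omegaM M (C ^ (k + 1) * t) + θ ^ k * C := by ring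
      have hθk : θ ^ k ≤ 1 := pow_le_one₀ hθ0 hθ1.le
      have hc : θ ^ k * C ≤ C := by nlinarith
      push_cast
      linarith
  obtain ⟨k, hk⟩ := exists_pow_lt_of_lt_one (by norm_num : (0:ℝ) < 1/2) hθ1
  have hC0 : (0:ℝ) < C := by linarith
  have hCk : (1:ℝ) ≤ C ^ k := one_le_pow₀ hC
  have hkC0 : (0:ℝ) ≤ 2 * (k : ℝ) * C := by positivity
  refine ⟨C ^ k + 2 * (k : ℝ) * C + 1, by linarith, ?_⟩
  intro t ht
  have h1 := hiter k t ht
  have hωk : 0 ≤ omegaM M (C ^ k * t) := omega_nonneg hM (by positivity)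
  have h2 : omegaM M (C ^ k * t) ≤ omegaM M ((C ^ k + 2 * (k : ℝ) * C + 1) * t) := by
    apply omega_mono hM (by positivity)
    have : (0:ℝ) ≤ (2 * (k : ℝ) * C + 1) * t := by positivity
    nlinarith
  have h3 : θ ^ k * omegaM M (C ^ k * t) ≤ (1/2) * omegaM M (C ^ k * t) :=
    mul_le_mul_of_nonneg_right hk.le hωk
  have hkC : (0:ℝ) ≤ (k:ℝ) * C := by positivity
  linarith

end Stmt3Aux


theorem stmt3 (M : ℕ → ℝ) (hM : IsLC M) :
    ((∃ a : ℕ, 0 < a ∧ ∃ C : ℝ, 1 ≤ C ∧ ∀ t : ℝ, 0 ≤ t →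
        omegaM M t ≤ (a : ℝ) * (omegaM M (C * t) - omegaM M t) + C) ↔
      Omega6 (omegaM M)) ∧
    (Omega6 (omegaM M) ↔
      ∃ C : ℝ, 1 ≤ C ∧ ∀ p q : ℕ, M (p + q) ≤ C ^ (p + q + 1) * M p * M q) := by
  constructor
  · constructor
    · exact Stmt3Aux.omega6_of_i hM
    · rintro ⟨H, hH, h6⟩
      refine ⟨1, one_pos, H, hH, fun t ht => ?_⟩
      have := h6 t ht
      push_cast
      linarith
  · exact ⟨Stmt3Aux.mg_of_omega6 hM, Stmt3Aux.omega6_of_mg hM⟩
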